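/- arXiv:math/0411451 — 6 statements merged into one kernel-verified Lean document; each statement's English description precedes it below -/
import Mathlib

section
/- If n is even, then in ℤ[a_{ij} : 1 ≤ i ≤ j ≤ n], the determinant of the symmetric n×n matrix with diagonal entries 2a_{ii} and off-diagonal entries a_{ij} is congruent modulo 4 to the determinant of the symmetric matrix with zero diagonal and the same off-diagonal entries a_{ij}. -/
open MvPolynomial Finset

namespace Stmt1Aux

variable {n : ℕ}

noncomputable abbrev R4 (n : ℕ) := MvPolynomial (Fin n × Fin n) (ZMod 4)

noncomputable def Amat (n : ℕ) : Matrix (Fin n) (Fin n) (R4 n) :=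
  Matrix.of fun i j : Fin n =>
    if i = j then 2 * X (i, i) else if i < j then X (i, j) else X (j, i)

noncomputable def Bmat (n : ℕ) : Matrix (Fin n) (Fin n) (R4 n) :=
  Matrix.of fun i j : Fin n =>
    if i = j then 0 else if i < j then X (i, j) else X (j, i)

lemma four_eq_zero : (4 : R4 n) = 0 := by
  have := CharP.cast_eq_zero (R4 n) 4
  simpa using this

lemma Asymm (i j : Fin n) : Amat n i j = Amat n j i := by
  rcases lt_trichotomy i j with h | h | h
  · simp [Amat, h, h.ne, h.ne', not_lt_of_gt h]
  · simp [Amat, h]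
  · simp [Amat, h, h.ne, h.ne', not_lt_of_gt h]

lemma Bsymm (i j : Fin n) : Bmat n i j = Bmat n j i := by
  rcases lt_trichotomy i j with h | h | h
  · simp [Bmat, h, h.ne, h.ne', not_lt_of_gt h]
  · simp [Bmat, h]
  · simp [Bmat, h, h.ne, h.ne', not_lt_of_gt h]

lemma prod_inv (M : Matrix (Fin n) (Fin n) (R4 n)) (hM : ∀ i j, M i j = M j i)
    (σ : Equiv.Perm (Fin n)) :
    ∏ i, M (σ i) i = ∏ i, M (σ⁻¹ i) i := by
  have := Equiv.prod_comp σ⁻¹ (fun i => M (σ i) i)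
  rw [← this]
  refine Finset.prod_congr rfl fun i _ => ?_
  rw [show σ (σ⁻¹ i) = i from σ.apply_symm_apply i, hM]

lemma prod_eq_of_no_fixed {σ : Equiv.Perm (Fin n)} (h : ∀ i, σ i ≠ i) :
    ∏ i, Amat n (σ i) i = ∏ i, Bmat n (σ i) i := by
  refine Finset.prod_congr rfl fun i _ => ?_
  simp [Amat, Bmat, h i]

lemma Bprod_eq_zero {σ : Equiv.Perm (Fin n)} {i : Fin n} (h : σ i = i) :
    ∏ j, Bmat n (σ j) j = 0 :=
  Finset.prod_eq_zero (Finset.mem_univ i) (by simp [Bmat, h])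

/-- An involution on an even-cardinality type with a fixed point has a second fixed point. -/
lemma exists_second_fixed (hn : Even n) {σ : Equiv.Perm (Fin n)}
    (hσ : ∀ x, σ (σ x) = x) {i : Fin n} (hi : σ i = i) :
    ∃ j, j ≠ i ∧ σ j = j := by
  classical
  set S : Finset (Fin n) := Finset.univ.filter (fun x => ¬ σ x = x) with hS
  have hScard : Even S.card := by
    have hz : ((S.card : ZMod 2)) = 0 := by
      rw [Finset.card_eq_sum_ones, Nat.cast_sum]
      refine Finset.sum_involution (fun x _ => σ x) (fun a ha => by decide)
        (fun a ha _ => by simpa [hS] using ha)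
        (fun a ha => ?_) (fun a ha => hσ a)
      · simp only [hS, Finset.mem_filter, Finset.mem_univ, true_and] at ha ⊢
        rw [hσ a]
        exact fun h => ha h.symm
    rw [ZMod.natCast_eq_zero_iff] at hz
    exact even_iff_two_dvd.mpr hz
  set F : Finset (Fin n) := Finset.univ.filter (fun x => σ x = x) with hF
  have hcards : F.card + S.card = n := by
    simpa using Finset.card_filter_add_card_filter_not (s := (Finset.univ : Finset (Fin n)))
      (p := fun x => σ x = x)
  have hFeven : Even F.card := by
    have : F.card = n - S.card := by omega
    rw [this]
    rw [Nat.even_sub (by omega)]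
    simp [hn, hScard]
  have hiF : i ∈ F := by simp [hF, hi]
  have h1 : 1 < F.card := by
    have h0 : 0 < F.card := Finset.card_pos.mpr ⟨i, hiF⟩
    rcases hFeven with ⟨k, hk⟩
    omega
  obtain ⟨j, hjF, hj⟩ := Finset.exists_mem_ne h1 i
  exact ⟨j, hj, by simpa [hF] using hjF⟩

lemma two_mul_diff (τ : Equiv.Perm (Fin n)) :
    2 * (∏ i, Amat n (τ i) i - ∏ i, Bmat n (τ i) i) = 0 := by
  by_cases hfix : ∃ i, τ i = i
  · obtain ⟨i, hi⟩ := hfix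
    rw [Bprod_eq_zero hi, sub_zero]
    have hdvd : Amat n (τ i) i ∣ ∏ k, Amat n (τ k) k :=
      Finset.dvd_prod_of_mem _ (Finset.mem_univ i)
    have e1 : Amat n (τ i) i = 2 * X (i, i) := by simp [Amat, hi]
    rw [e1] at hdvd
    obtain ⟨c, hc⟩ := hdvd
    rw [hc]
    have : (2 : R4 n) * (2 * X (i, i) * c) = 4 * (X (i, i) * c) := by ring
    rw [this, four_eq_zero, zero_mul]
  · push_neg at hfix
    rw [prod_eq_of_no_fixed hfix, sub_self, mul_zero]

lemma det_eq (hn : Even n) : (Amat n).det = (Bmat n).det := by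
  classical
  rw [Matrix.det_apply, Matrix.det_apply, ← sub_eq_zero, ← Finset.sum_sub_distrib]
  refine Finset.sum_involution (fun σ _ => σ⁻¹) ?_ ?_ (fun σ _ => Finset.mem_univ _)
    (fun σ _ => inv_inv σ)
  · -- pairing: d σ + d σ⁻¹ = 0
    intro σ _
    simp only [Equiv.Perm.sign_inv]
    rw [prod_inv (Amat n) Asymm σ, prod_inv (Bmat n) Bsymm σ]
    simp only [Units.smul_def, zsmul_eq_mul]
    have h := two_mul_diff (n := n) σ⁻¹
    linear_combination (((Equiv.Perm.sign σ : ℤ) : R4 n)) * h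
  · intro σ _ hne
    intro hinv
    apply hne
    have hinv' : σ⁻¹ = σ := hinv
    have hσ : ∀ x, σ (σ x) = x := by
      intro x
      have h0 : σ (σ⁻¹ x) = x := σ.apply_symm_apply x
      rwa [hinv'] at h0
    by_cases hfix : ∃ i, σ i = i
    · obtain ⟨i, hi⟩ := hfix
      obtain ⟨j, hj, hjfix⟩ := exists_second_fixed hn hσ hi
      have hA : ∏ k, Amat n (σ k) k = 0 := by
        have hsub : ({i, j} : Finset (Fin n)) ⊆ Finset.univ := Finset.subset_univ _
        have hdvd : ∏ k ∈ ({i, j} : Finset (Fin n)), Amat n (σ k) k ∣ ∏ k, Amat n (σ k) k :=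
          Finset.prod_dvd_prod_of_subset _ _ _ hsub
        rw [Finset.prod_pair (Ne.symm hj)] at hdvd
        have : Amat n (σ i) i * Amat n (σ j) j = 0 := by
          have e1 : Amat n (σ i) i = 2 * X (i, i) := by simp [Amat, hi]
          have e2 : Amat n (σ j) j = 2 * X (j, j) := by simp [Amat, hjfix]
          rw [e1, e2]
          have : (2 : R4 n) * X (i, i) * (2 * X (j, j)) = 4 * (X (i, i) * X (j, j)) := by ring
          rw [this, four_eq_zero, zero_mul]
        rw [this] at hdvd
        exact eq_zero_of_zero_dvd hdvd
      rw [hA, Bprod_eq_zero hi]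
      simp
    · push_neg at hfix
      rw [prod_eq_of_no_fixed hfix]
      simp

end Stmt1Aux

/-- If `n` is even, then in `ℤ[a_{ij} : 1 ≤ i ≤ j ≤ n]` the determinant of the symmetric
matrix with diagonal `2 a_{ii}` and off-diagonal entries `a_{ij}` is congruent modulo `4`
to the determinant of the symmetric matrix with zero diagonal and the same off-diagonal
entries. -/
theorem stmt1 (n : ℕ) (hn : Even n) :
    ∃ g : MvPolynomial (Fin n × Fin n) ℤ,
      (Matrix.of fun i j : Fin n =>
          if i = j then 2 * MvPolynomial.X (i, i)
          else if i < j then MvPolynomial.X (i, j) else MvPolynomial.X (j, i)).det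
      - (Matrix.of fun i j : Fin n =>
          if i = j then 0
          else if i < j then MvPolynomial.X (i, j) else MvPolynomial.X (j, i)).det
      = 4 * g := by
  classical
  set AZ : Matrix (Fin n) (Fin n) (MvPolynomial (Fin n × Fin n) ℤ) :=
    Matrix.of fun i j : Fin n =>
      if i = j then 2 * MvPolynomial.X (i, i)
      else if i < j then MvPolynomial.X (i, j) else MvPolynomial.X (j, i) with hAZ
  set BZ : Matrix (Fin n) (Fin n) (MvPolynomial (Fin n × Fin n) ℤ) :=
    Matrix.of fun i j : Fin n =>
      if i = j then 0
      else if i < j then MvPolynomial.X (i, j) else MvPolynomial.X (j, i) with hBZ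
  set p := AZ.det - BZ.det with hp
  let f : MvPolynomial (Fin n × Fin n) ℤ →+* Stmt1Aux.R4 n :=
    MvPolynomial.map (Int.castRingHom (ZMod 4))
  have hAmap : AZ.map f = Stmt1Aux.Amat n := by
    ext i j
    simp only [Matrix.map_apply, hAZ, Matrix.of_apply, Stmt1Aux.Amat, apply_ite f,
      map_mul, map_ofNat, MvPolynomial.map_X, map_zero, f]
  have hBmap : BZ.map f = Stmt1Aux.Bmat n := by
    ext i j
    simp only [Matrix.map_apply, hBZ, Matrix.of_apply, Stmt1Aux.Bmat, apply_ite f,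
      map_mul, map_ofNat, MvPolynomial.map_X, map_zero, f]
  have hfp : f p = 0 := by
    rw [hp, map_sub, RingHom.map_det, RingHom.map_det, RingHom.mapMatrix_apply,
      RingHom.mapMatrix_apply, hAmap, hBmap, Stmt1Aux.det_eq hn, sub_self]
  have hdvd : MvPolynomial.C (4 : ℤ) ∣ p := by
    rw [MvPolynomial.C_dvd_iff_dvd_coeff]
    intro m
    have : (f p).coeff m = 0 := by rw [hfp]; simp
    rw [MvPolynomial.coeff_map] at this
    have := (ZMod.intCast_zmod_eq_zero_iff_dvd _ 4).mp this
    exact_mod_cast this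
  obtain ⟨g, hg⟩ := hdvd
  refine ⟨g, ?_⟩
  rw [hg]
  congr 1
end

section
/- If n = 2ν is even, then in ℤ[a_{ij} : 1 ≤ i < j ≤ n], the determinant of the alternating matrix with entries a_{ij} above the diagonal and -a_{ij} below is congruent modulo 4 to (-1)^ν times the determinant of the symmetric matrix with zero diagonal and entries a_{ij} off the diagonal. -/
open MvPolynomial Matrix Equiv Finset

namespace Stmt2Aux

variable {n : ℕ}

/-- sorted pair of `i` and `σ i`. -/
def pr (σ : Equiv.Perm (Fin n)) (i : Fin n) : Fin n × Fin n :=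
  if σ i < i then (σ i, i) else (i, σ i)

noncomputable def mm (σ : Equiv.Perm (Fin n)) : MvPolynomial (Fin n × Fin n) (ZMod 4) :=
  ∏ i, X (pr σ i)

def dd (σ : Equiv.Perm (Fin n)) : ℕ := #(univ.filter fun i => σ i < i)

def cc (σ : Equiv.Perm (Fin n)) : ℕ := #(univ.filter fun i => ¬ σ i < i)

lemma pr_inv (σ : Equiv.Perm (Fin n)) (i : Fin n) : pr σ⁻¹ (σ i) = pr σ i := by
  simp only [pr, Equiv.Perm.coe_inv, Equiv.symm_apply_apply]
  rcases lt_trichotomy (σ i) i with h | h | h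
  · simp [h, not_lt_of_gt h]
  · simp [h]
  · simp [h, not_lt_of_gt h]

lemma mm_inv (σ : Equiv.Perm (Fin n)) : mm σ⁻¹ = mm σ := by
  unfold mm
  rw [← Equiv.prod_comp σ (fun i => X (pr σ⁻¹ i))]
  exact Finset.prod_congr rfl fun i _ => by rw [pr_inv]

lemma dd_add_cc (σ : Equiv.Perm (Fin n)) : dd σ + cc σ = n := by
  unfold dd cc
  rw [Finset.card_filter_add_card_filter_not]
  simp

lemma cc_inv (σ : Equiv.Perm (Fin n)) (h : ∀ i, σ i ≠ i) : cc σ⁻¹ = dd σ := by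
  unfold dd cc
  refine (Finset.card_nbij' (fun j => σ j) (fun i => σ⁻¹ i) ?_ ?_ ?_ ?_).symm
  · intro a ha
    simp only [Finset.mem_filter, Finset.mem_univ, true_and, Finset.mem_coe,
      Equiv.Perm.coe_inv, Equiv.symm_apply_apply] at ha ⊢
    exact asymm ha
  · intro a ha
    simp only [Finset.mem_filter, Finset.mem_univ, true_and, Finset.mem_coe,
      Equiv.Perm.coe_inv, Equiv.apply_symm_apply] at ha ⊢
    have hne : σ⁻¹ a ≠ a := by
      intro hc
      exact h a (by conv_lhs => rw [← hc, Equiv.Perm.coe_inv, Equiv.apply_symm_apply])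
    exact lt_of_le_of_ne (not_lt.mp ha) (Ne.symm hne)
  · intro a _; simp
  · intro a _; simp

/-- a fixed-point free involution has exactly `ν` descents. -/
lemma cc_involution {ν : ℕ} (hn : n = 2 * ν) (σ : Equiv.Perm (Fin n))
    (h : ∀ i, σ i ≠ i) (hinv : σ⁻¹ = σ) : cc σ = ν := by
  have h1 : cc σ = dd σ := by rw [← hinv, cc_inv σ h, hinv]
  have h2 := dd_add_cc σ
  omega

section ring

variable {R : Type*} [CommRing R]

lemma neg_one_pow_eq_of_even (a b : ℕ) (h : Even (a + b)) : (-1 : R) ^ a = (-1 : R) ^ b := by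
  rcases Nat.even_or_odd a with ha | ha
  · have hb : Even b := by
      rcases h with ⟨k, hk⟩; rcases ha with ⟨l, hl⟩; exact ⟨k - l, by omega⟩
    rw [ha.neg_one_pow, hb.neg_one_pow]
  · have hb : Odd b := by
      rcases h with ⟨k, hk⟩; rcases ha with ⟨l, hl⟩; exact ⟨k - l - 1, by omega⟩
    rw [ha.neg_one_pow, hb.neg_one_pow]

lemma two_mul_pow_sub_pow (h4 : (4 : R) = 0) (a b : ℕ) :
    (2 : R) * ((-1 : R) ^ a - (-1 : R) ^ b) = 0 := by
  rcases Nat.even_or_odd a with ha | ha <;> rcases Nat.even_or_odd b with hb | hb <;>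
    simp only [ha.neg_one_pow, hb.neg_one_pow]
  · ring
  · linear_combination h4
  · linear_combination -h4
  · ring

end ring


section matrices

variable (n)

noncomputable def AA : Matrix (Fin n) (Fin n) (MvPolynomial (Fin n × Fin n) (ZMod 4)) :=
  Matrix.of fun i j : Fin n =>
    if i < j then X (i, j) else if j < i then -X (j, i) else 0

noncomputable def BB : Matrix (Fin n) (Fin n) (MvPolynomial (Fin n × Fin n) (ZMod 4)) :=
  Matrix.of fun i j : Fin n =>
    if i < j then X (i, j) else if j < i then X (j, i) else 0

variable {n}

lemma prodA (σ : Equiv.Perm (Fin n)) (h : ∀ i, σ i ≠ i) :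
    (∏ i, AA n (σ i) i) = (-1) ^ cc σ * mm σ := by
  have key : ∀ i : Fin n,
      AA n (σ i) i = (if σ i < i then (1 : MvPolynomial (Fin n × Fin n) (ZMod 4)) else -1)
        * X (pr σ i) := by
    intro i
    rcases lt_trichotomy (σ i) i with hlt | heq | hgt
    · simp [AA, Matrix.of_apply, pr, hlt, not_lt_of_gt hlt]
    · exact absurd heq (h i)
    · simp [AA, Matrix.of_apply, pr, hgt, not_lt_of_gt hgt]
  rw [Finset.prod_congr rfl fun i _ => key i, Finset.prod_mul_distrib]
  unfold mm cc
  congr 1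
  rw [Finset.prod_ite]
  simp [Finset.prod_const]

lemma prodB (σ : Equiv.Perm (Fin n)) (h : ∀ i, σ i ≠ i) :
    (∏ i, BB n (σ i) i) = mm σ := by
  unfold mm
  refine Finset.prod_congr rfl fun i _ => ?_
  rcases lt_trichotomy (σ i) i with hlt | heq | hgt
  · simp [BB, Matrix.of_apply, pr, hlt, not_lt_of_gt hlt]
  · exact absurd heq (h i)
  · simp [BB, Matrix.of_apply, pr, hgt, not_lt_of_gt hgt]

lemma h4 : (4 : MvPolynomial (Fin n × Fin n) (ZMod 4)) = 0 := by
  have h0 : ((4 : ℕ) : ZMod 4) = 0 := by decide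
  rw [show (4 : MvPolynomial (Fin n × Fin n) (ZMod 4)) = ((4 : ℕ) : _) from by norm_cast,
    ← C_eq_coe_nat, h0, map_zero]

/-- the per-permutation difference. -/
noncomputable def GG (ν : ℕ) (σ : Equiv.Perm (Fin n)) : MvPolynomial (Fin n × Fin n) (ZMod 4) :=
  (∏ i, AA n (σ i) i) - (-1) ^ ν * ∏ i, BB n (σ i) i

lemma GG_zero_of_fix (ν : ℕ) (σ : Equiv.Perm (Fin n)) {i : Fin n} (hi : σ i = i) :
    GG ν σ = 0 := by
  have hA : AA n (σ i) i = 0 := by simp [AA, hi]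
  have hB : BB n (σ i) i = 0 := by simp [BB, hi]
  unfold GG
  rw [Finset.prod_eq_zero (f := fun j => AA n (σ j) j) (Finset.mem_univ i) hA,
    Finset.prod_eq_zero (f := fun j => BB n (σ j) j) (Finset.mem_univ i) hB]
  ring

lemma GG_add (ν : ℕ) (hn : n = 2 * ν) (σ : Equiv.Perm (Fin n)) :
    GG ν σ + GG ν σ⁻¹ = 0 := by
  by_cases hfp : ∀ i, σ i ≠ i
  · have hfp' : ∀ i, σ⁻¹ i ≠ i := by
      intro i hc
      exact hfp i (by conv_lhs => rw [← hc, Equiv.Perm.coe_inv, Equiv.apply_symm_apply])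
    have hcc : (-1 : MvPolynomial (Fin n × Fin n) (ZMod 4)) ^ cc σ⁻¹ = (-1) ^ cc σ := by
      refine neg_one_pow_eq_of_even _ _ ?_
      rw [cc_inv σ hfp]
      have h2 := dd_add_cc σ
      exact ⟨ν, by omega⟩
    unfold GG
    rw [prodA σ hfp, prodB σ hfp, prodA σ⁻¹ hfp', prodB σ⁻¹ hfp', mm_inv, hcc]
    have := two_mul_pow_sub_pow (h4 (n := n)) (cc σ) ν
    linear_combination mm σ * this
  · push_neg at hfp
    obtain ⟨i, hi⟩ := hfp
    rw [GG_zero_of_fix ν σ hi, GG_zero_of_fix ν σ⁻¹ (i := i) (by conv_lhs => rw [← hi, Equiv.Perm.coe_inv, Equiv.symm_apply_apply])]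
    ring

lemma GG_self (ν : ℕ) (hn : n = 2 * ν) (σ : Equiv.Perm (Fin n)) (hinv : σ⁻¹ = σ) :
    GG ν σ = 0 := by
  by_cases hfp : ∀ i, σ i ≠ i
  · unfold GG
    rw [prodA σ hfp, prodB σ hfp, cc_involution hn σ hfp hinv]
    ring
  · push_neg at hfp
    obtain ⟨i, hi⟩ := hfp
    exact GG_zero_of_fix ν σ hi

lemma det_congr (ν : ℕ) (hn : n = 2 * ν) :
    (AA n).det - (-1) ^ ν * (BB n).det = 0 := by
  rw [det_apply, det_apply, Finset.mul_sum, ← Finset.sum_sub_distrib]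
  have term_eq : ∀ σ : Equiv.Perm (Fin n),
      (Equiv.Perm.sign σ • ∏ i, AA n (σ i) i)
        - (-1) ^ ν * (Equiv.Perm.sign σ • ∏ i, BB n (σ i) i)
      = ((Equiv.Perm.sign σ : ℤ) : MvPolynomial (Fin n × Fin n) (ZMod 4)) * GG ν σ := by
    intro σ
    unfold GG
    simp only [Units.smul_def, zsmul_eq_mul]
    ring
  refine Finset.sum_ninvolution (fun σ => σ⁻¹) ?_ ?_ (fun σ => Finset.mem_univ _) ?_
  · intro σ
    rw [term_eq, term_eq, Equiv.Perm.sign_inv]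
    have := GG_add ν hn σ
    linear_combination ((Equiv.Perm.sign σ : ℤ) : MvPolynomial (Fin n × Fin n) (ZMod 4)) * this
  · intro σ hne hc
    refine hne ?_
    rw [term_eq, GG_self ν hn σ hc, mul_zero]
  · intro σ
    exact inv_inv σ

end matrices

end Stmt2Aux


/-- If `n = 2ν` is even, then in `ℤ[a_{ij} : 1 ≤ i < j ≤ n]` the determinant of the generic
alternating matrix (entries `a_{ij}` above, `-a_{ij}` below the diagonal) is congruent
modulo `4` to `(-1)^ν` times the determinant of the symmetric matrix with zero diagonal and
off-diagonal entries `a_{ij}`. -/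
theorem stmt2 (ν : ℕ) :
    ∃ g : MvPolynomial (Fin (2 * ν) × Fin (2 * ν)) ℤ,
      (Matrix.of fun i j : Fin (2 * ν) =>
          if i < j then MvPolynomial.X (i, j)
          else if j < i then -MvPolynomial.X (j, i) else 0).det
      - (-1) ^ ν *
        (Matrix.of fun i j : Fin (2 * ν) =>
          if i < j then MvPolynomial.X (i, j)
          else if j < i then MvPolynomial.X (j, i) else 0).det
      = 4 * g := by
  classical
  set φ := MvPolynomial.map (R := ℤ) (S₁ := ZMod 4) (Int.castRingHom (ZMod 4)) with hφ
  set D := (Matrix.of fun i j : Fin (2 * ν) =>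
          if i < j then (MvPolynomial.X (i, j) : MvPolynomial (Fin (2 * ν) × Fin (2 * ν)) ℤ)
          else if j < i then -MvPolynomial.X (j, i) else 0).det
      - (-1) ^ ν *
        (Matrix.of fun i j : Fin (2 * ν) =>
          if i < j then MvPolynomial.X (i, j)
          else if j < i then MvPolynomial.X (j, i) else 0).det with hD
  have hmapA : (Matrix.of fun i j : Fin (2 * ν) =>
        if i < j then (MvPolynomial.X (i, j) : MvPolynomial (Fin (2 * ν) × Fin (2 * ν)) ℤ)
        else if j < i then -MvPolynomial.X (j, i) else 0).map φ = Stmt2Aux.AA (2 * ν) := by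
    ext i j : 1
    simp [Stmt2Aux.AA, Matrix.map_apply, hφ, apply_ite (MvPolynomial.map (σ := Fin (2 * ν) × Fin (2 * ν)) (Int.castRingHom (ZMod 4)))]
  have hmapB : (Matrix.of fun i j : Fin (2 * ν) =>
        if i < j then (MvPolynomial.X (i, j) : MvPolynomial (Fin (2 * ν) × Fin (2 * ν)) ℤ)
        else if j < i then MvPolynomial.X (j, i) else 0).map φ = Stmt2Aux.BB (2 * ν) := by
    ext i j : 1
    simp [Stmt2Aux.BB, Matrix.map_apply, hφ, apply_ite (MvPolynomial.map (σ := Fin (2 * ν) × Fin (2 * ν)) (Int.castRingHom (ZMod 4)))]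
  have hmap : φ D = 0 := by
    rw [hD, map_sub, _root_.map_mul, map_pow, map_neg, _root_.map_one,
      RingHom.map_det, RingHom.map_det, RingHom.mapMatrix_apply, RingHom.mapMatrix_apply, hmapA, hmapB]
    exact Stmt2Aux.det_congr ν rfl
  have hdvd : MvPolynomial.C ((4 : ℕ) : ℤ) ∣ D :=
    (MvPolynomial.C_dvd_iff_zmod 4 D).mpr hmap
  obtain ⟨g, hg⟩ := hdvd
  refine ⟨g, ?_⟩
  rw [hg, MvPolynomial.C_eq_coe_nat]
  norm_num
end

section
/- Over a commutative ring where det of an alternating matrix equals the square of its Pfaffian: for an even-sized alternating matrix A with entries in a ring of characteristic 0, det(A)·det(B) = det(D)² where A, B, D share the same lower-right alternating block C and have first rows/columns built from vectors a and b as in Lemma 2.4. -/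
open Matrix

/-- The bordered matrix with first row `(0, x)`, first column `(0, -y)ᵗ` and lower-right
block `C`. -/
def border {R : Type*} [CommRing R] {m : ℕ} (x y : Fin m → R)
    (C : Matrix (Fin m) (Fin m) R) : Matrix (Fin (m + 1)) (Fin (m + 1)) R :=
  Matrix.of fun i j =>
    Fin.cases (Fin.cases (0 : R) (fun j' => x j') j)
      (fun i' => Fin.cases (-(y i')) (fun j' => C i' j') j) i

namespace Dodg

variable {R : Type*} [CommRing R] {n : ℕ}

/-- The block equivalence `Fin 2 ⊕ Fin n ≃ Fin (n + 2)`. -/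
def e (n : ℕ) : Fin 2 ⊕ Fin n ≃ Fin (n + 2) :=
  finSumFinEquiv.trans (finCongr (Nat.add_comm 2 n))

lemma e_inl (i : Fin 2) : e n (Sum.inl i) = ⟨i.1, by omega⟩ := by
  apply Fin.ext; simp [e]

lemma e_inr (j : Fin n) : e n (Sum.inr j) = ⟨j.1 + 2, by omega⟩ := by
  apply Fin.ext; simp [e]

lemma e_inl_zero : e n (Sum.inl 0) = 0 := by apply Fin.ext; simp [e_inl]

lemma e_inl_one : e n (Sum.inl 1) = 1 := by apply Fin.ext; simp [e_inl]

lemma det_via_blocks (P : Matrix (Fin (n + 2)) (Fin (n + 2)) R) :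
    P.det = (fromBlocks
      (P.submatrix (e n ∘ Sum.inl) (e n ∘ Sum.inl)) (P.submatrix (e n ∘ Sum.inl) (e n ∘ Sum.inr))
      (P.submatrix (e n ∘ Sum.inr) (e n ∘ Sum.inl))
      (P.submatrix (e n ∘ Sum.inr) (e n ∘ Sum.inr))).det := by
  rw [← det_submatrix_equiv_self (e n)]
  congr 1
  ext i j
  cases i <;> cases j <;> rfl

/-- The auxiliary matrix whose first two columns are columns of the adjugate and which
is the identity elsewhere. -/
def N (M : Matrix (Fin (n + 2)) (Fin (n + 2)) R) : Matrix (Fin (n + 2)) (Fin (n + 2)) R :=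
  Matrix.of fun i j =>
    if j = 0 then adjugate M i 0 else if j = 1 then adjugate M i 1 else
      if i = j then 1 else 0

lemma det_N (M : Matrix (Fin (n + 2)) (Fin (n + 2)) R) :
    (N M).det = adjugate M 0 0 * adjugate M 1 1 - adjugate M 0 1 * adjugate M 1 0 := by
  rw [det_via_blocks (N M)]
  have h12 : (N M).submatrix (e n ∘ Sum.inl) (e n ∘ Sum.inr) = 0 := by
    ext i j
    have h0 : e n (Sum.inr j) ≠ 0 := by simp [e_inr, Fin.ext_iff]
    have h1 : e n (Sum.inr j) ≠ 1 := by simp [e_inr, Fin.ext_iff]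
    have h2 : e n (Sum.inl i) ≠ e n (Sum.inr j) := by simp [(e n).injective.ne_iff]
    simp [N, h0, h1, h2]
  have h22 : (N M).submatrix (e n ∘ Sum.inr) (e n ∘ Sum.inr) = 1 := by
    ext i j
    have h0 : e n (Sum.inr j) ≠ 0 := by simp [e_inr, Fin.ext_iff]
    have h1 : e n (Sum.inr j) ≠ 1 := by simp [e_inr, Fin.ext_iff]
    simp [N, h0, h1, (e n).injective.eq_iff, Matrix.one_apply]
  rw [h12, h22, det_fromBlocks_zero₁₂, det_one, mul_one, det_fin_two]
  simp [N, submatrix_apply, e_inl_zero, e_inl_one, Fin.one_pos.ne']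

lemma mul_N (M : Matrix (Fin (n + 2)) (Fin (n + 2)) R) (i j : Fin (n + 2)) :
    (M * N M) i j =
      if j = 0 then (M.det • (1 : Matrix (Fin (n + 2)) (Fin (n + 2)) R)) i 0
      else if j = 1 then (M.det • (1 : Matrix (Fin (n + 2)) (Fin (n + 2)) R)) i 1
      else M i j := by
  rcases eq_or_ne j 0 with rfl | hj0
  · simp only [if_pos rfl, ← mul_adjugate M]
    simp [Matrix.mul_apply, N]
  · rcases eq_or_ne j 1 with rfl | hj1
    · simp only [if_neg hj0, if_pos rfl, ← mul_adjugate M]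
      simp [Matrix.mul_apply, N, hj0]
    · simp only [if_neg hj0, if_neg hj1]
      rw [Matrix.mul_apply]
      rw [Finset.sum_eq_single j]
      · simp [N, hj0, hj1]
      · intro k _ hk
        simp [N, hj0, hj1, hk]
      · simp

lemma det_mul_N (M : Matrix (Fin (n + 2)) (Fin (n + 2)) R) :
    (M * N M).det = M.det ^ 2 * (M.submatrix (e n ∘ Sum.inr) (e n ∘ Sum.inr)).det := by
  rw [det_via_blocks (M * N M)]
  have h21 : (M * N M).submatrix (e n ∘ Sum.inr) (e n ∘ Sum.inl) = 0 := by
    ext i j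
    have hne0 : e n (Sum.inr i) ≠ 0 := by simp [e_inr, Fin.ext_iff]
    have hne1 : e n (Sum.inr i) ≠ 1 := by simp [e_inr, Fin.ext_iff]
    fin_cases j <;>
      simp [submatrix_apply, mul_N, e_inl_zero, e_inl_one, Matrix.one_apply, hne0, hne1]
  have h11 : (M * N M).submatrix (e n ∘ Sum.inl) (e n ∘ Sum.inl)
      = M.det • (1 : Matrix (Fin 2) (Fin 2) R) := by
    ext i j
    fin_cases i <;> fin_cases j <;>
      simp [submatrix_apply, mul_N, e_inl_zero, e_inl_one, Matrix.one_apply, Fin.ext_iff]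
  have h22 : (M * N M).submatrix (e n ∘ Sum.inr) (e n ∘ Sum.inr)
      = M.submatrix (e n ∘ Sum.inr) (e n ∘ Sum.inr) := by
    ext i j
    have h0 : e n (Sum.inr j) ≠ 0 := by simp [e_inr, Fin.ext_iff]
    have h1 : e n (Sum.inr j) ≠ 1 := by simp [e_inr, Fin.ext_iff]
    simp [submatrix_apply, mul_N, h0, h1]
  rw [h21, h11, h22, det_fromBlocks_zero₂₁, det_smul, det_one]
  simp [sq]

/-- The key identity, valid over any commutative ring (no cancellation yet). -/
lemma pre (M : Matrix (Fin (n + 2)) (Fin (n + 2)) R) :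
    M.det * (adjugate M 0 0 * adjugate M 1 1 - adjugate M 0 1 * adjugate M 1 0)
      = M.det ^ 2 * (M.submatrix (e n ∘ Sum.inr) (e n ∘ Sum.inr)).det := by
  rw [← det_N, ← det_mul_N, det_mul]

end Dodg

namespace Dodg

/-- The generic matrix. -/
noncomputable def genG (n : ℕ) : Matrix (Fin (n + 2)) (Fin (n + 2)) (MvPolynomial (Fin (n + 2) × Fin (n + 2)) ℤ) :=
  Matrix.of fun i j => MvPolynomial.X (i, j)

set_option synthInstance.maxHeartbeats 1000000 in
open MvPolynomial in
lemma dodgson_adj_generic (n : ℕ) :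
    adjugate (genG n) 0 0 * adjugate (genG n) 1 1 - adjugate (genG n) 0 1 * adjugate (genG n) 1 0
      = (genG n).det * ((genG n).submatrix (e n ∘ Sum.inr) (e n ∘ Sum.inr)).det := by
  set R' := MvPolynomial (Fin (n + 2) × Fin (n + 2)) ℤ with hR'
  set G := genG n with hGdef
  have hdetG : G.det ≠ 0 := by
    intro h
    have h2 := congrArg (MvPolynomial.eval fun p : Fin (n + 2) × Fin (n + 2) =>
      if p.1 = p.2 then (1 : ℤ) else 0) h
    rw [RingHom.map_det, map_zero] at h2
    have h3 : (MvPolynomial.eval fun p : Fin (n + 2) × Fin (n + 2) =>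
        if p.1 = p.2 then (1 : ℤ) else 0).mapMatrix G = 1 := by
      ext i j
      simp [hGdef, genG, Matrix.one_apply]
    rw [h3, det_one] at h2
    exact one_ne_zero h2
  have hφ : Function.Injective (algebraMap R' (FractionRing R')) :=
    IsFractionRing.injective R' (FractionRing R')
  set φ := algebraMap R' (FractionRing R') with hφdef
  have hdetGK : (φ.mapMatrix G).det ≠ 0 := by
    rw [← RingHom.map_det]
    simpa using fun h => hdetG (hφ (by simpa using h))
  have hK := pre (φ.mapMatrix G)
  rw [sq, mul_assoc] at hK
  have hK2 := mul_left_cancel₀ hdetGK hK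
  apply hφ
  simp only [map_sub, _root_.map_mul]
  have hsub : ∀ i j, φ (adjugate G i j) = adjugate (φ.mapMatrix G) i j := by
    intro i j; rw [← RingHom.map_adjugate φ G]; rfl
  rw [hsub, hsub, hsub, hsub, RingHom.map_det, RingHom.map_det, hK2]
  rfl

open MvPolynomial in
/-- Jacobi-style identity: the `2×2` corner minor of the adjugate equals
`det M` times the complementary minor; valid over any commutative ring. -/
lemma dodgson_adj {R : Type*} [CommRing R] {n : ℕ} (M : Matrix (Fin (n + 2)) (Fin (n + 2)) R) :
    adjugate M 0 0 * adjugate M 1 1 - adjugate M 0 1 * adjugate M 1 0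
      = M.det * (M.submatrix (e n ∘ Sum.inr) (e n ∘ Sum.inr)).det := by
  have key := dodgson_adj_generic n
  set R' := MvPolynomial (Fin (n + 2) × Fin (n + 2)) ℤ with hR'
  set G := genG n with hG
  let ψ : R' →+* R := MvPolynomial.eval₂Hom (Int.castRingHom R) fun p => M p.1 p.2
  have hψG : ψ.mapMatrix G = M := by
    ext i j
    exact MvPolynomial.eval₂Hom_X' _ _ (i, j)
  have := congrArg ψ key
  simp only [map_sub, _root_.map_mul] at this
  have hsub : ∀ i j, ψ (adjugate G i j) = adjugate M i j := by
    intro i j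
    rw [show adjugate M = adjugate (ψ.mapMatrix G) by rw [hψG], ← RingHom.map_adjugate]; rfl
  have hs : ψ.mapMatrix (G.submatrix (e n ∘ Sum.inr) (e n ∘ Sum.inr))
      = M.submatrix (e n ∘ Sum.inr) (e n ∘ Sum.inr) := by rw [← hψG]; rfl
  rw [hsub, hsub, hsub, hsub, RingHom.map_det, RingHom.map_det, hψG, hs] at this
  exact this

/-- Desnanot–Jacobi / Dodgson condensation for the rows/columns `0` and `1`. -/
lemma dodgson {R : Type*} [CommRing R] {n : ℕ} (M : Matrix (Fin (n + 2)) (Fin (n + 2)) R) :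
    (M.submatrix (Fin.succAbove 0) (Fin.succAbove 0)).det *
        (M.submatrix (Fin.succAbove 1) (Fin.succAbove 1)).det
      - (M.submatrix (Fin.succAbove 0) (Fin.succAbove 1)).det *
        (M.submatrix (Fin.succAbove 1) (Fin.succAbove 0)).det
      = M.det * (M.submatrix (e n ∘ Sum.inr) (e n ∘ Sum.inr)).det := by
  have h := dodgson_adj M
  rw [adjugate_fin_succ_eq_det_submatrix, adjugate_fin_succ_eq_det_submatrix,
    adjugate_fin_succ_eq_det_submatrix, adjugate_fin_succ_eq_det_submatrix] at h
  norm_num at h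
  simp only [Fin.succAbove_zero]
  linear_combination h

end Dodg

section BorderLemmas

variable {R : Type*} [CommRing R] {m : ℕ} (x y : Fin m → R) (C : Matrix (Fin m) (Fin m) R)

@[simp] lemma border_zero_zero : border x y C 0 0 = 0 := rfl

@[simp] lemma border_zero_succ (j : Fin m) : border x y C 0 j.succ = x j := by
  simp [border]

@[simp] lemma border_succ_zero (i : Fin m) : border x y C i.succ 0 = -y i := by
  simp [border]

@[simp] lemma border_succ_succ (i j : Fin m) : border x y C i.succ j.succ = C i j := by
  simp [border]

@[simp] lemma border_zero_one {x y : Fin (m + 1) → R} {C : Matrix (Fin (m + 1)) (Fin (m + 1)) R} :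
    border x y C 0 1 = x 0 := by
  have := border_zero_succ x y C 0; rwa [Fin.succ_zero_eq_one] at this

@[simp] lemma border_one_zero {x y : Fin (m + 1) → R} {C : Matrix (Fin (m + 1)) (Fin (m + 1)) R} :
    border x y C 1 0 = -y 0 := by
  have := border_succ_zero x y C 0; rwa [Fin.succ_zero_eq_one] at this

@[simp] lemma border_one_succ {x y : Fin (m + 1) → R} {C : Matrix (Fin (m + 1)) (Fin (m + 1)) R}
    (j : Fin m) : border x y C 1 j.succ.succ = C 0 j.succ := by
  have := border_succ_succ x y C 0 j.succ; rwa [Fin.succ_zero_eq_one] at this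

@[simp] lemma border_succ_one {x y : Fin (m + 1) → R} {C : Matrix (Fin (m + 1)) (Fin (m + 1)) R}
    (i : Fin m) : border x y C i.succ.succ 1 = C i.succ 0 := by
  have := border_succ_succ x y C i.succ 0; rwa [Fin.succ_zero_eq_one] at this

@[simp] lemma border_one_one {x y : Fin (m + 1) → R} {C : Matrix (Fin (m + 1)) (Fin (m + 1)) R} :
    border x y C 1 1 = C 0 0 := by
  have := border_succ_succ x y C 0 0; rwa [Fin.succ_zero_eq_one] at this

lemma border_transpose : (border x y C)ᵀ = border (-y) (-x) Cᵀ := by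
  ext i j
  refine Fin.cases ?_ (fun i' => ?_) i <;> refine Fin.cases ?_ (fun j' => ?_) j <;> simp

lemma border_neg : border (-x) (-y) (-C) = -(border x y C) := by
  ext i j
  refine Fin.cases ?_ (fun i' => ?_) i <;> refine Fin.cases ?_ (fun j' => ?_) j <;> simp

lemma border_alt (hC : Cᵀ = -C) : (border x x C)ᵀ = -(border x x C) := by
  rw [border_transpose, hC, border_neg]

lemma det_border_swap (hC : Cᵀ = -C) (hm : Even (m + 1)) :
    (border y x C).det = (border x y C).det := by
  have h : border y x C = -((border x y C)ᵀ) := by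
    rw [border_transpose, hC, border_neg, neg_neg]
  rw [h, det_neg, det_transpose, Fintype.card_fin, hm.neg_one_pow, one_mul]

lemma det_alt_odd {k : ℕ} [IsDomain R] [CharZero R] (M : Matrix (Fin k) (Fin k) R)
    (hk : Odd k) (hM : Mᵀ = -M) : M.det = 0 := by
  have h : M.det = -M.det := by
    conv_lhs => rw [← det_transpose, hM, det_neg, Fintype.card_fin, hk.neg_one_pow]
    ring
  have h2 : (2 : R) * M.det = 0 := by linear_combination h
  rcases mul_eq_zero.mp h2 with h3 | h3
  · exact absurd h3 two_ne_zero
  · exact h3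

end BorderLemmas


section Minors

variable {R : Type*} [CommRing R] {m : ℕ} (a b : Fin m → R) (C : Matrix (Fin m) (Fin m) R)

/-- The doubly bordered `(m+2) × (m+2)` matrix `[[0,0,a],[0,0,b],[-ᵗa,-ᵗb,C]]`. -/
def bigM : Matrix (Fin (m + 2)) (Fin (m + 2)) R :=
  border (Fin.cons 0 a) (Fin.cons 0 a) (border b b C)

lemma sA1_zero : (1 : Fin (m + 2)).succAbove 0 = 0 := Fin.one_succAbove_zero

lemma sA1_succ (j : Fin m) : (1 : Fin (m + 2)).succAbove j.succ = j.succ.succ := by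
  rw [← Fin.succ_zero_eq_one, Fin.succ_succAbove_succ, Fin.succAbove_zero]

lemma bigM_sub00 :
    (bigM a b C).submatrix (Fin.succAbove 0) (Fin.succAbove 0) = border b b C := by
  ext i j
  simp [bigM]

lemma bigM_sub11 :
    (bigM a b C).submatrix (Fin.succAbove 1) (Fin.succAbove 1) = border a a C := by
  ext i j
  refine Fin.cases ?_ (fun i' => ?_) i <;> refine Fin.cases ?_ (fun j' => ?_) j <;>
    simp [bigM, sA1_zero, sA1_succ]

lemma bigM_sub01 :
    (bigM a b C).submatrix (Fin.succAbove 0) (Fin.succAbove 1) = border b a C := by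
  ext i j
  refine Fin.cases ?_ (fun i' => ?_) i <;> refine Fin.cases ?_ (fun j' => ?_) j <;>
    simp [bigM, sA1_zero, sA1_succ]

lemma bigM_sub10 :
    (bigM a b C).submatrix (Fin.succAbove 1) (Fin.succAbove 0) = border a b C := by
  ext i j
  refine Fin.cases ?_ (fun i' => ?_) i <;> refine Fin.cases ?_ (fun j' => ?_) j <;>
    simp [bigM, sA1_zero, sA1_succ]

lemma bigM_inner :
    (bigM a b C).submatrix (Dodg.e m ∘ Sum.inr) (Dodg.e m ∘ Sum.inr) = C := by
  have he : ∀ i : Fin m, Dodg.e m (Sum.inr i) = i.succ.succ := by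
    intro i; rw [Dodg.e_inr]; apply Fin.ext; simp
  ext i j
  simp [bigM, he]

end Minors

open MvPolynomial in
/-- Let `n = m + 1 ≥ 2` be even and work with generic indeterminates over `ℚ`: `C` the
generic alternating `m × m` matrix, and generic vectors `a`, `b`.  With
`A = [[0, a], [-ᵗa, C]]`, `B = [[0, b], [-ᵗb, C]]`, `D = [[0, a], [-ᵗb, C]]`, we have
`det A * det B = (det D)^2` (hence the same identity holds over
`ℚ(a_{1j}, b_{1j}, c_{ij})`). -/
theorem stmt4 (m : ℕ) (hm : Even (m + 1)) :
    (border (fun i => MvPolynomial.X (Sum.inl (Sum.inl i)))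
        (fun i => MvPolynomial.X (Sum.inl (Sum.inl i)))
        (Matrix.of fun i j : Fin m =>
          if i < j then MvPolynomial.X (Sum.inr (i, j))
          else if j < i then -MvPolynomial.X (Sum.inr (j, i)) else 0)).det *
      (border (fun i => MvPolynomial.X (Sum.inl (Sum.inr i)))
        (fun i => MvPolynomial.X (Sum.inl (Sum.inr i)))
        (Matrix.of fun i j : Fin m =>
          if i < j then MvPolynomial.X (Sum.inr (i, j))
          else if j < i then -MvPolynomial.X (Sum.inr (j, i)) else 0)).det
    = ((border (fun i => MvPolynomial.X (Sum.inl (Sum.inl i)))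
        (fun i => (MvPolynomial.X (Sum.inl (Sum.inr i)) :
          MvPolynomial ((Fin m ⊕ Fin m) ⊕ Fin m × Fin m) ℚ))
        (Matrix.of fun i j : Fin m =>
          if i < j then MvPolynomial.X (Sum.inr (i, j))
          else if j < i then -MvPolynomial.X (Sum.inr (j, i)) else 0)).det) ^ 2 := by
  set R0 := MvPolynomial ((Fin m ⊕ Fin m) ⊕ Fin m × Fin m) ℚ with hR0
  set C : Matrix (Fin m) (Fin m) R0 := Matrix.of fun i j : Fin m =>
      if i < j then MvPolynomial.X (Sum.inr (i, j))
      else if j < i then -MvPolynomial.X (Sum.inr (j, i)) else 0 with hCdef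
  set a : Fin m → R0 := fun i => MvPolynomial.X (Sum.inl (Sum.inl i)) with hadef
  set b : Fin m → R0 := fun i => MvPolynomial.X (Sum.inl (Sum.inr i)) with hbdef
  have hC : Cᵀ = -C := by
    refine Matrix.ext fun i j => ?_
    rcases lt_trichotomy i j with h | h | h
    · simp [hCdef, Matrix.neg_apply, h, lt_asymm h]
    · subst h; simp [hCdef]
    · simp [hCdef, Matrix.neg_apply, h, lt_asymm h]
      exact (neg_neg (MvPolynomial.X (Sum.inr (j, i)) : R0)).symm
  have hModd : Odd (m + 2) := by
    obtain ⟨k, hk⟩ := hm; exact ⟨k, by omega⟩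
  have hMalt : (bigM a b C)ᵀ = -(bigM a b C) := by
    have hD := border_alt b C hC
    unfold bigM
    rw [border_transpose, hD, border_neg]
  have hdet0 : (bigM a b C).det = 0 := det_alt_odd _ hModd hMalt
  have h := Dodg.dodgson (bigM a b C)
  rw [bigM_sub00, bigM_sub11, bigM_sub01, bigM_sub10, bigM_inner, hdet0, zero_mul] at h
  have hsw : (border b a C).det = (border a b C).det := det_border_swap a b C hC hm
  linear_combination h + (border a b C).det * hsw
end

section
/- Let f_{ij} ∈ F_q[X_1,...,X_n] for 1 ≤ i ≤ j ≤ m, where F_q has characteristic two. Then the determinant of the symmetric m×m matrix with diagonal entries f_{ii}² and off-diagonal entries f_{ij} is a square in F_q[f_{ij} : 1 ≤ i ≤ j ≤ m]; that is, there exists f in the subring generated by the f_{ij} with det = f². -/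
open Matrix MvPolynomial

/-- Over a finite field of characteristic two, the determinant of the symmetric `m × m`
matrix with diagonal entries `f_{ii}²` and off-diagonal entries `f_{ij}` (where the
`f_{ij}` are polynomials in `F_q[X_1,…,X_n]`) is the square of an element of the subring
generated over `F_q` by the `f_{ij}`. -/
theorem stmt5 {F : Type*} [Field F] [Fintype F] (hchar : CharP F 2) (m n : ℕ)
    (f : Fin m → Fin m → MvPolynomial (Fin n) F) :
    ∃ g ∈ Algebra.adjoin F {x : MvPolynomial (Fin n) F | ∃ i j : Fin m, i ≤ j ∧ x = f i j},
      (Matrix.of fun i j : Fin m =>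
        if i = j then f i i ^ 2 else if i < j then f i j else f j i).det = g ^ 2 := by
  classical
  haveI := hchar
  haveI : CharP (MvPolynomial (Fin n) F) 2 := inferInstance
  set A := Algebra.adjoin F {x : MvPolynomial (Fin n) F | ∃ i j : Fin m, i ≤ j ∧ x = f i j} with hA
  set M : Matrix (Fin m) (Fin m) (MvPolynomial (Fin n) F) := Matrix.of fun i j : Fin m =>
      if i = j then f i i ^ 2 else if i < j then f i j else f j i with hM
  have hsym : ∀ i j, M i j = M j i := by
    intro i j
    simp only [hM, Matrix.of_apply]
    rcases lt_trichotomy i j with h | h | h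
    · rw [if_neg h.ne, if_pos h, if_neg h.ne', if_neg (not_lt.mpr h.le)]
    · simp [h]
    · rw [if_neg h.ne', if_neg (not_lt.mpr h.le), if_neg h.ne, if_pos h]
  have hmemd : ∀ i : Fin m, f i i ∈ A :=
    fun i => Algebra.subset_adjoin ⟨i, i, le_refl i, rfl⟩
  have hmem : ∀ i j, i ≠ j → M i j ∈ A := by
    intro i j hij
    simp only [hM, Matrix.of_apply, if_neg hij]
    rcases lt_or_ge i j with h | h
    · rw [if_pos h]; exact Algebra.subset_adjoin ⟨i, j, h.le, rfl⟩
    · rw [if_neg (not_lt.mpr h)]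
      exact Algebra.subset_adjoin ⟨j, i, h, rfl⟩
  -- product over all i of M (σ i) i
  set P : Equiv.Perm (Fin m) → MvPolynomial (Fin n) F := fun σ => ∏ i, M (σ i) i with hP
  have hPinv : ∀ σ : Equiv.Perm (Fin m), P σ⁻¹ = P σ := by
    intro σ
    have : ∀ j : Fin m, M (σ⁻¹ j) j = (fun i => M i (σ i)) (σ⁻¹ j) := by
      intro j; simp [hsym (σ⁻¹ j) j, Equiv.apply_symm_apply]
    calc P σ⁻¹ = ∏ j, (fun i => M i (σ i)) (σ⁻¹ j) := by
            refine Finset.prod_congr rfl fun j _ => this j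
      _ = ∏ i, M i (σ i) := Equiv.prod_comp σ⁻¹ (fun i => M i (σ i))
      _ = P σ := Finset.prod_congr rfl fun i _ => hsym i (σ i)
  -- determinant as a plain sum (char 2 kills signs)
  have hdet : M.det = ∑ σ : Equiv.Perm (Fin m), P σ := by
    rw [Matrix.det_apply]
    refine Finset.sum_congr rfl fun σ _ => ?_
    rcases Int.units_eq_one_or (Equiv.Perm.sign σ) with h | h <;>
      simp [h, CharTwo.neg_eq, hP]
  -- split into involutions and the rest
  set S : Finset (Equiv.Perm (Fin m)) :=
    Finset.univ.filter (fun σ => σ * σ = 1) with hS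
  have hsplit : ∑ σ : Equiv.Perm (Fin m), P σ = ∑ σ ∈ S, P σ := by
    rw [← Finset.sum_filter_add_sum_filter_not Finset.univ (fun σ => σ * σ = 1) P]
    have hzero : ∑ σ ∈ Finset.univ.filter (fun σ => ¬ σ * σ = 1), P σ = 0 := by
      refine Finset.sum_involution (fun σ _ => σ⁻¹) ?_ ?_ ?_ ?_
      · intro σ hσ
        show P σ + P σ⁻¹ = 0
        rw [hPinv σ]
        exact CharTwo.add_self_eq_zero _
      · intro σ hσ _
        show σ⁻¹ ≠ σ
        simp only [Finset.mem_filter, Finset.mem_univ, true_and] at hσ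
        intro h
        exact hσ (by have := mul_inv_cancel σ; rw [h] at this; exact this)
      · intro σ hσ
        show σ⁻¹ ∈ _
        simp only [Finset.mem_filter, Finset.mem_univ, true_and] at hσ ⊢
        intro h
        exact hσ (by have := congrArg (·⁻¹) h; simpa [_root_.mul_inv_rev] using this)
      · intro σ _
        show σ⁻¹⁻¹ = σ
        simp
    rw [hzero, add_zero]
  -- for each involution, P σ is a square of an explicit element Q σ ∈ A
  set Q : Equiv.Perm (Fin m) → MvPolynomial (Fin n) F := fun σ =>
    (∏ i ∈ Finset.univ.filter (fun i => σ i = i), f i i) *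
      ∏ i ∈ Finset.univ.filter (fun i => i < σ i), M (σ i) i with hQ
  have hQmem : ∀ σ, Q σ ∈ A := by
    intro σ
    refine Subalgebra.mul_mem _ (Subalgebra.prod_mem _ fun i _ => hmemd i)
      (Subalgebra.prod_mem _ fun i hi => ?_)
    simp only [Finset.mem_filter] at hi
    exact hmem (σ i) i (ne_of_gt hi.2)
  have hPQ : ∀ σ ∈ S, P σ = Q σ ^ 2 := by
    intro σ hσ
    simp only [hS, Finset.mem_filter] at hσ
    have hinv : ∀ i, σ (σ i) = i := by
      intro i
      have := congrArg (fun τ => τ i) hσ.2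
      simpa using this
    -- split univ into fixed, lower, upper
    have hdisj : Disjoint (Finset.univ.filter (fun i : Fin m => σ i = i))
        (Finset.univ.filter (fun i => i < σ i) ∪ Finset.univ.filter (fun i => σ i < i)) := by
      rw [Finset.disjoint_left]
      intro i hi hi'
      simp only [Finset.mem_filter, Finset.mem_union, Finset.mem_univ, true_and] at hi hi'
      rcases hi' with h | h <;> rw [hi] at h <;> exact lt_irrefl _ h
    have hdisj2 : Disjoint (Finset.univ.filter (fun i : Fin m => i < σ i))
        (Finset.univ.filter (fun i => σ i < i)) := by
      rw [Finset.disjoint_left]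
      intro i hi hi'
      simp only [Finset.mem_filter, Finset.mem_univ, true_and] at hi hi'
      exact lt_asymm hi hi'
    have hcover : Finset.univ = Finset.univ.filter (fun i : Fin m => σ i = i) ∪
        (Finset.univ.filter (fun i => i < σ i) ∪ Finset.univ.filter (fun i => σ i < i)) := by
      ext i
      simp only [Finset.mem_univ, Finset.mem_union, Finset.mem_filter, true_and, true_iff]
      rcases lt_trichotomy i (σ i) with h | h | h
      · exact Or.inr (Or.inl h)
      · exact Or.inl h.symm
      · exact Or.inr (Or.inr h)
    have hupper : ∏ i ∈ Finset.univ.filter (fun i => σ i < i), M (σ i) i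
        = ∏ i ∈ Finset.univ.filter (fun i => i < σ i), M (σ i) i := by
      refine Finset.prod_nbij' (fun i => σ i) (fun i => σ i) ?_ ?_ ?_ ?_ ?_
      · intro i hi
        simp only [Finset.mem_filter, Finset.mem_univ, true_and] at hi ⊢
        rw [hinv]; exact hi
      · intro i hi
        simp only [Finset.mem_filter, Finset.mem_univ, true_and] at hi ⊢
        rw [hinv]; exact hi
      · intro i _; exact hinv i
      · intro i _; exact hinv i
      · intro i _
        rw [hinv i, hsym]
    have hfix : ∏ i ∈ Finset.univ.filter (fun i : Fin m => σ i = i), M (σ i) i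
        = (∏ i ∈ Finset.univ.filter (fun i : Fin m => σ i = i), f i i) ^ 2 := by
      rw [← Finset.prod_pow]
      refine Finset.prod_congr rfl fun i hi => ?_
      simp only [Finset.mem_filter] at hi
      rw [hi.2]
      simp [hM]
    calc P σ = ∏ i ∈ Finset.univ.filter (fun i : Fin m => σ i = i) ∪
        (Finset.univ.filter (fun i => i < σ i) ∪ Finset.univ.filter (fun i => σ i < i)),
          M (σ i) i := by rw [hP, ← hcover]
      _ = (∏ i ∈ Finset.univ.filter (fun i : Fin m => σ i = i), M (σ i) i) *
          ((∏ i ∈ Finset.univ.filter (fun i => i < σ i), M (σ i) i) *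
            ∏ i ∈ Finset.univ.filter (fun i => σ i < i), M (σ i) i) := by
          rw [Finset.prod_union hdisj, Finset.prod_union hdisj2]
      _ = (∏ i ∈ Finset.univ.filter (fun i : Fin m => σ i = i), f i i) ^ 2 *
          (∏ i ∈ Finset.univ.filter (fun i => i < σ i), M (σ i) i) ^ 2 := by
          rw [hfix, hupper, ← pow_two]
      _ = Q σ ^ 2 := by rw [hQ, mul_pow]
  refine ⟨∑ σ ∈ S, Q σ, Subalgebra.sum_mem _ fun σ _ => hQmem σ, ?_⟩
  rw [hdet, hsplit, CharTwo.sum_sq]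
  exact Finset.sum_congr rfl hPQ
end

section
/- In a commutative ring of characteristic 2, the determinant of a symmetric matrix with zero diagonal (which is then alternating) of odd size is zero. -/
open Matrix

lemma even_of_fpf_involution {n : ℕ} (σ : Equiv.Perm (Fin n)) (h2 : σ * σ = 1)
    (hf : ∀ i, σ i ≠ i) : Even n := by
  have hsupp : σ.support = Finset.univ := by
    ext i; simp [Equiv.Perm.mem_support, hf i]
  have hsum := Equiv.Perm.sum_cycleType σ
  rw [hsupp, Finset.card_univ, Fintype.card_fin] at hsum
  have hord : orderOf σ ∣ 2 := orderOf_dvd_of_pow_eq_one (by rw [pow_two]; exact h2)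
  have hall : ∀ x ∈ σ.cycleType, x = 2 := by
    intro x hx
    have h1 : 2 ≤ x := Equiv.Perm.two_le_of_mem_cycleType hx
    have hdvd : x ∣ 2 := (Equiv.Perm.dvd_of_mem_cycleType hx).trans hord
    exact Nat.le_antisymm (Nat.le_of_dvd two_pos hdvd) h1
  have : σ.cycleType = Multiset.replicate (Multiset.card σ.cycleType) 2 :=
    Multiset.eq_replicate_card.mpr hall
  rw [this, Multiset.sum_replicate, smul_eq_mul] at hsum
  exact ⟨Multiset.card σ.cycleType, by omega⟩

/-- In a commutative ring of characteristic `2`, the determinant of a symmetric matrix with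
zero diagonal (hence alternating) of odd size is zero. -/
theorem stmt6 {R : Type*} [CommRing R] (h2 : (2 : R) = 0) (n : ℕ) (hn : Odd n)
    (A : Matrix (Fin n) (Fin n) R) (hs : Aᵀ = A) (hd : ∀ i, A i i = 0) :
    A.det = 0 := by
  have hsym : ∀ i j, A i j = A j i := fun i j => by
    conv_lhs => rw [← hs, Matrix.transpose_apply]
  rw [Matrix.det_apply]
  set f : Equiv.Perm (Fin n) → R := fun σ => Equiv.Perm.sign σ • ∏ i, A (σ i) i with hf
  have key : ∀ σ : Equiv.Perm (Fin n), f σ⁻¹ = f σ := by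
    intro σ
    have hprod : ∏ i, A (σ⁻¹ i) i = ∏ i, A (σ i) i := by
      rw [← Equiv.prod_comp σ (fun i => A (σ⁻¹ i) i)]
      simp only [Equiv.Perm.inv_def, Equiv.symm_apply_apply]
      exact Finset.prod_congr rfl fun i _ => hsym i (σ i)
    simpa [hf] using hprod
  refine Finset.sum_ninvolution (fun σ => σ⁻¹) (fun σ => ?_) (fun σ hne heq => ?_)
    (fun _ => Finset.mem_univ _) (fun σ => inv_inv σ)
  · show f σ + f σ⁻¹ = 0
    rw [key σ, ← two_smul R (f σ), h2, zero_smul]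
  · -- heq : σ⁻¹ = σ, hne : f σ ≠ 0; derive contradiction
    apply hne
    show f σ = 0
    by_cases hfix : ∃ i, σ i = i
    · obtain ⟨i, hi⟩ := hfix
      have : ∏ i, A (σ i) i = 0 :=
        Finset.prod_eq_zero (Finset.mem_univ i) (by rw [hi]; exact hd i)
      simp [hf, this]
    · push_neg at hfix
      have heq' : σ⁻¹ = σ := heq
      have hmul : σ * σ = 1 := by
        nth_rewrite 2 [← heq']
        simp
      exact absurd (even_of_fpf_involution σ hmul hfix) (Nat.not_even_iff_odd.mpr hn)
end

section
/- Let F_q have characteristic 2, n = 2ν+2, S = S_{2ν+2}, and K = det of the (n-1)×(n-1) matrix with (i,j) entry P_{n,|i-j|}^{q^{min(i,j)-1}}. Then the specialization of K at X_{n-1} = X_n equals the square of the Moore determinant det(X_j^{q^{i-1}})_{1≤i,j≤n-1} in the variables X_1,...,X_{n-1}; in particular K ≠ 0. -/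
open Matrix MvPolynomial

/-- auxiliary: product of monomials with coefficient 1 -/
theorem aux_prod_monomial {R σ' ι : Type*} [CommSemiring R] (s : Finset ι) (d : ι → (σ' →₀ ℕ)) :
    ∏ i ∈ s, (monomial (d i) (1 : R)) = monomial (∑ i ∈ s, d i) 1 := by
  induction s using Finset.cons_induction with
  | empty => simp
  | cons a s ha ih =>
      rw [Finset.prod_cons, Finset.sum_cons, ih, monomial_mul, one_mul]

theorem aux_moore_ne_zero {R σ' : Type*} [CommRing R] [Nontrivial R] {m : ℕ}
    (e : Fin m → σ') (he : Function.Injective e) (q : ℕ) (hq : 2 ≤ q) :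
    (Matrix.of fun i j : Fin m => (X (e j) : MvPolynomial σ' R) ^ q ^ (i : ℕ)).det ≠ 0 := by
  classical
  set d : Equiv.Perm (Fin m) → (σ' →₀ ℕ) := fun σ => ∑ j : Fin m, Finsupp.single (e j) (q ^ ((σ j : ℕ))) with hd
  have happ : ∀ (σ : Equiv.Perm (Fin m)) (j : Fin m), d σ (e j) = q ^ ((σ j : ℕ)) := by
    intro σ j
    rw [hd]
    rw [Finsupp.finset_sum_apply]
    rw [Finset.sum_eq_single j]
    · simp
    · intro b _ hb
      rw [Finsupp.single_apply, if_neg (fun h => hb (he h))]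
    · simp
  have hdinj : ∀ σ : Equiv.Perm (Fin m), d σ = d 1 → σ = 1 := by
    intro σ h
    ext j
    have := congrArg (fun f => f (e j)) h
    simp only [happ] at this
    have := Nat.pow_right_injective hq this
    simpa using congrArg Fin.val (Fin.val_injective this : σ j = (1 : Equiv.Perm (Fin m)) j)
  intro h0
  have hco : MvPolynomial.coeff (d 1) ((Matrix.of fun i j : Fin m => (X (e j) : MvPolynomial σ' R) ^ q ^ (i : ℕ)).det) = 1 := by
    rw [Matrix.det_apply']
    have hterm : ∀ σ : Equiv.Perm (Fin m),
        (∏ i : Fin m, (Matrix.of fun i j : Fin m => (X (e j) : MvPolynomial σ' R) ^ q ^ (i : ℕ)) (σ i) i)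
          = monomial (d σ) 1 := by
      intro σ
      have : ∀ i : Fin m, (Matrix.of fun i j : Fin m => (X (e j) : MvPolynomial σ' R) ^ q ^ (i : ℕ)) (σ i) i
          = monomial (Finsupp.single (e i) (q ^ ((σ i : ℕ)))) 1 := by
        intro i; simp [X_pow_eq_monomial]
      rw [Finset.prod_congr rfl (fun i _ => this i), aux_prod_monomial]
    rw [Finset.sum_congr rfl (fun σ _ => by rw [hterm σ])]
    rw [coeff_sum]
    rw [Finset.sum_eq_single 1]
    · rw [← map_intCast (C : R →+* MvPolynomial σ' R), coeff_C_mul, coeff_monomial]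
      simp
    · intro σ _ hσ
      have hne : d σ ≠ d 1 := fun h => hσ (hdinj _ h)
      rw [← map_intCast (C : R →+* MvPolynomial σ' R), coeff_C_mul, coeff_monomial,
        if_neg hne, mul_zero]
    · simp
  rw [h0] at hco
  simp at hco



def pv (ν x : ℕ) : ℕ :=
  if x < ν then x + ν else if x < 2 * ν then x - ν else if x = 2 * ν then 2 * ν + 1 else 2 * ν

def sv (ν x : ℕ) : ℕ :=
  if x < ν then x + ν else if x < 2 * ν then x - ν else x

theorem pv_lt (ν x : ℕ) (hx : x < 2 * ν + 2) : pv ν x < 2 * ν + 2 := by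
  unfold pv; split_ifs <;> omega

theorem sv_lt (ν x : ℕ) (hx : x < 2 * ν + 1) : sv ν x < 2 * ν + 1 := by
  unfold sv; split_ifs <;> omega

theorem sv_sv (ν x : ℕ) (hx : x < 2 * ν + 1) : sv ν (sv ν x) = x := by
  unfold sv; split_ifs <;> omega

theorem pv_eq_sv (ν x : ℕ) (hx : x < 2 * ν) : pv ν x = sv ν x := by
  unfold pv sv; split_ifs <;> omega

def sF (ν : ℕ) : Fin (2 * ν + 1) → Fin (2 * ν + 1) := fun a => ⟨sv ν a, sv_lt ν a a.isLt⟩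

theorem sF_invol (ν : ℕ) : Function.Involutive (sF ν) := fun a => Fin.ext (sv_sv ν a a.isLt)

def sPerm (ν : ℕ) : Equiv.Perm (Fin (2 * ν + 1)) := Function.Involutive.toPerm (sF ν) (sF_invol ν)

theorem sPerm_apply (ν : ℕ) (a : Fin (2 * ν + 1)) : sPerm ν a = sF ν a := rfl

theorem S_decomp (ν : ℕ) {F : Type*} [Field F] (i j : Fin (2 * ν + 2)) :
    (if (i : ℕ) < ν ∧ (j : ℕ) = (i : ℕ) + ν then (1 : F)
     else if (j : ℕ) < ν ∧ (i : ℕ) = (j : ℕ) + ν then 1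
     else if (i : ℕ) = 2 * ν ∧ (j : ℕ) = 2 * ν + 1 then 1
     else if (i : ℕ) = 2 * ν + 1 ∧ (j : ℕ) = 2 * ν then 1
     else if (i : ℕ) = 2 * ν + 1 ∧ (j : ℕ) = 2 * ν + 1 then 1
     else 0)
    = (if (j : ℕ) = pv ν (i : ℕ) then (1 : F) else 0)
      + (if (i : ℕ) = 2 * ν + 1 ∧ (j : ℕ) = 2 * ν + 1 then 1 else 0) := by
  have hi := i.isLt; have hj := j.isLt
  unfold pv
  split_ifs <;> first | (exfalso; omega) | simp

theorem sv_lt2 (ν x : ℕ) (hx : x < 2 * ν) : sv ν x < 2 * ν := by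
  unfold sv; split_ifs <;> omega

theorem pv_2n (ν : ℕ) : pv ν (2 * ν) = 2 * ν + 1 := by
  unfold pv; split_ifs <;> omega

theorem pv_2n1 (ν : ℕ) : pv ν (2 * ν + 1) = 2 * ν := by
  unfold pv; split_ifs <;> omega

theorem sv_2n (ν : ℕ) : sv ν (2 * ν) = 2 * ν := by
  unfold sv; split_ifs <;> omega

noncomputable def gfun (ν : ℕ) (F : Type*) [Field F] : Fin (2 * ν + 2) → MvPolynomial (Fin (2 * ν + 2)) F :=
  fun i => if (i : ℕ) = 2 * ν then X (Fin.last (2 * ν + 1)) else X i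

noncomputable def Yfun (ν : ℕ) (F : Type*) [Field F] : Fin (2 * ν + 1) → MvPolynomial (Fin (2 * ν + 2)) F :=
  fun j => if (j : ℕ) = 2 * ν then X (Fin.last (2 * ν + 1)) else X (Fin.castSucc j)

theorem sum_collapse2 {F : Type*} [Field F] (ν Q k : ℕ) :
    (∑ i : Fin (2 * ν + 2), ∑ j : Fin (2 * ν + 2),
       C ((if (j : ℕ) = pv ν (i : ℕ) then (1 : F) else 0)
          + (if (i : ℕ) = 2 * ν + 1 ∧ (j : ℕ) = 2 * ν + 1 then 1 else 0)) * X i * X j ^ Q ^ k)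
    = (∑ i : Fin (2 * ν + 2),
        X i * (X (⟨pv ν i, pv_lt ν i i.isLt⟩ : Fin (2 * ν + 2)) : MvPolynomial (Fin (2 * ν + 2)) F) ^ Q ^ k)
      + X (⟨2 * ν + 1, by omega⟩ : Fin (2 * ν + 2)) * X (⟨2 * ν + 1, by omega⟩ : Fin (2 * ν + 2)) ^ Q ^ k := by
  have h1 : ∀ i j : Fin (2 * ν + 2), ((j : ℕ) = pv ν (i : ℕ)) = (j = ⟨pv ν i, pv_lt ν i i.isLt⟩) := by
    intro i j; rw [Fin.ext_iff]
  have h2 : ∀ i : Fin (2 * ν + 2), ((i : ℕ) = 2 * ν + 1) = (i = ⟨2 * ν + 1, by omega⟩) := by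
    intro i; rw [Fin.ext_iff]
  simp only [map_add, add_mul, Finset.sum_add_distrib]
  congr 1
  · refine Finset.sum_congr rfl fun i _ => ?_
    simp only [h1, apply_ite C, C_1, C_0, ite_mul, zero_mul, one_mul,
      Finset.sum_ite_eq', Finset.mem_univ, if_true]
  · simp only [h2, apply_ite C, C_1, C_0, ite_mul, zero_mul, one_mul, ite_and,
      Finset.sum_ite_irrel, Finset.sum_const_zero, Finset.sum_ite_eq', Finset.mem_univ, if_true]

theorem sum_reindex {F : Type*} [Field F] (hchar : CharP F 2) (ν Q k : ℕ) :
    (∑ i : Fin (2 * ν + 2), gfun ν F i * gfun ν F ⟨pv ν i, pv_lt ν i i.isLt⟩ ^ Q ^ k)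
      + gfun ν F ⟨2 * ν + 1, by omega⟩ * gfun ν F ⟨2 * ν + 1, by omega⟩ ^ Q ^ k
    = ∑ a : Fin (2 * ν + 1), Yfun ν F a * Yfun ν F (sF ν a) ^ Q ^ k := by
  haveI := hchar
  set L : MvPolynomial (Fin (2 * ν + 2)) F := X (Fin.last (2 * ν + 1)) with hL
  have hg2n : ∀ (j : Fin (2 * ν + 2)), (j : ℕ) = 2 * ν → gfun ν F j = L := by
    intro j hj; simp only [gfun]; rw [if_pos hj]
  have hg2n1 : ∀ (j : Fin (2 * ν + 2)), (j : ℕ) = 2 * ν + 1 → gfun ν F j = L := by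
    intro j hj
    simp only [gfun]; rw [if_neg (by omega)]
    rw [hL]
    congr 1
    exact Fin.ext (by simpa using hj)
  have hY2n : ∀ (a : Fin (2 * ν + 1)), (a : ℕ) = 2 * ν → Yfun ν F a = L := by
    intro a ha; simp only [Yfun]; rw [if_pos ha]
  have corner : ∀ j : Fin (2 * ν + 2), ((j : ℕ) = 2 * ν ∨ (j : ℕ) = 2 * ν + 1) →
      gfun ν F j * gfun ν F ⟨pv ν j, pv_lt ν j j.isLt⟩ ^ Q ^ k = L * L ^ Q ^ k := by
    rintro j (hj | hj)
    · rw [hg2n _ hj, hg2n1 _ (by simp [hj, pv_2n])]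
    · rw [hg2n1 _ hj, hg2n _ (by simp [hj, pv_2n1])]
  rw [Fin.sum_univ_castSucc (n := 2 * ν + 1), Fin.sum_univ_castSucc (n := 2 * ν),
    Fin.sum_univ_castSucc (n := 2 * ν)]
  have hmain : ∀ i : Fin (2 * ν),
      gfun ν F ((Fin.castSucc (Fin.castSucc i)))
        * gfun ν F ⟨pv ν ((Fin.castSucc (Fin.castSucc i)) : ℕ),
            pv_lt ν _ (Fin.castSucc (Fin.castSucc i)).isLt⟩ ^ Q ^ k
      = Yfun ν F (Fin.castSucc i) * Yfun ν F (sF ν (Fin.castSucc i)) ^ Q ^ k := by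
    intro i
    have hi : (i : ℕ) < 2 * ν := i.isLt
    have hplt : pv ν (i : ℕ) < 2 * ν := by
      rw [pv_eq_sv ν _ hi]; exact sv_lt2 ν _ hi
    have hslt : sv ν (i : ℕ) < 2 * ν := sv_lt2 ν _ hi
    have e1 : gfun ν F (Fin.castSucc (Fin.castSucc i)) = Yfun ν F (Fin.castSucc i) := by
      simp only [gfun, Yfun, Fin.coe_castSucc]
    have e2 : gfun ν F ⟨pv ν ((Fin.castSucc (Fin.castSucc i)) : ℕ),
          pv_lt ν _ (Fin.castSucc (Fin.castSucc i)).isLt⟩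
        = Yfun ν F (sF ν (Fin.castSucc i)) := by
      simp only [gfun, Yfun, sF, Fin.coe_castSucc, Fin.val_mk]
      simp only [show ¬ sv ν (i : ℕ) = 2 * ν by omega, show ¬ pv ν (i : ℕ) = 2 * ν by omega, ↓reduceIte]
      congr 1
      exact Fin.ext (pv_eq_sv ν _ hi)
    rw [e1, e2]
  rw [Finset.sum_congr rfl (fun i _ => hmain i)]
  have c1 := corner (Fin.castSucc (Fin.last (2 * ν))) (Or.inl (by simp))
  have c2 := corner (Fin.last (2 * ν + 1)) (Or.inr (by simp))
  have c3 : gfun ν F (⟨2 * ν + 1, by omega⟩ : Fin (2 * ν + 2))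
      * gfun ν F (⟨2 * ν + 1, by omega⟩ : Fin (2 * ν + 2)) ^ Q ^ k = L * L ^ Q ^ k := by
    rw [hg2n1 _ rfl]
  have c4 : Yfun ν F (Fin.last (2 * ν)) * Yfun ν F (sF ν (Fin.last (2 * ν))) ^ Q ^ k
      = L * L ^ Q ^ k := by
    rw [hY2n _ (by simp), hY2n _ (by simp [sF, sv_2n])]
  rw [c1, c2, c3, c4]
  have hself : (L * L ^ Q ^ k) + (L * L ^ Q ^ k) = 0 := CharTwo.add_self_eq_zero _
  linear_combination hself

/-- Let `F_q` have characteristic two, `n = 2ν + 2`, `S = S_{2ν+2}`,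
`P_{nk} = X S (X^{q^k})ᵗ`, and `K` the determinant of the `(n-1) × (n-1)` matrix with
`(i,j)` entry `P_{n,|i-j|}^{q^{min(i,j)-1}}`.  The specialization of `K` at
`X_{n-1} = X_n` equals the square of the Moore determinant of `X_1, …, X_{n-2}, X_n`;
in particular `K ≠ 0`. -/
theorem stmt15 {F : Type*} [Field F] [Fintype F] (hchar : CharP F 2) (ν : ℕ)
    (S : Matrix (Fin (2 * ν + 2)) (Fin (2 * ν + 2)) F)
    (hS : S = Matrix.of fun i j : Fin (2 * ν + 2) =>
        if (i : ℕ) < ν ∧ (j : ℕ) = (i : ℕ) + ν then (1 : F)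
        else if (j : ℕ) < ν ∧ (i : ℕ) = (j : ℕ) + ν then 1
        else if (i : ℕ) = 2 * ν ∧ (j : ℕ) = 2 * ν + 1 then 1
        else if (i : ℕ) = 2 * ν + 1 ∧ (j : ℕ) = 2 * ν then 1
        else if (i : ℕ) = 2 * ν + 1 ∧ (j : ℕ) = 2 * ν + 1 then 1
        else 0)
    (P : ℕ → MvPolynomial (Fin (2 * ν + 2)) F)
    (hP : ∀ k, P k = ∑ i : Fin (2 * ν + 2), ∑ j : Fin (2 * ν + 2),
        C (S i j) * X i * X j ^ Fintype.card F ^ k)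
    (K : MvPolynomial (Fin (2 * ν + 2)) F)
    (hK : K = (Matrix.of fun i j : Fin (2 * ν + 1) =>
        if (i : ℕ) ≤ (j : ℕ) then P ((j : ℕ) - (i : ℕ)) ^ Fintype.card F ^ (i : ℕ)
        else P ((i : ℕ) - (j : ℕ)) ^ Fintype.card F ^ (j : ℕ)).det) :
    aeval (fun i : Fin (2 * ν + 2) =>
        if (i : ℕ) = 2 * ν then X (Fin.last (2 * ν + 1)) else (X i : MvPolynomial (Fin (2 * ν + 2)) F)) K
      = (Matrix.of fun i j : Fin (2 * ν + 1) =>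
          (if (j : ℕ) = 2 * ν then X (Fin.last (2 * ν + 1))
           else (X (Fin.castSucc j) : MvPolynomial (Fin (2 * ν + 2)) F)) ^
            Fintype.card F ^ (i : ℕ)).det ^ 2
    ∧ K ≠ 0 := by
  classical
  haveI := hchar
  haveI : ExpChar (MvPolynomial (Fin (2 * ν + 2)) F) 2 := ExpChar.prime Nat.prime_two
  obtain ⟨f, hp2, hcard⟩ := FiniteField.card F 2
  have hq2 : 2 ≤ Fintype.card F := Fintype.one_lt_card
  rw [show (fun i : Fin (2 * ν + 2) =>
      if (i : ℕ) = 2 * ν then X (Fin.last (2 * ν + 1))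
      else (X i : MvPolynomial (Fin (2 * ν + 2)) F)) = gfun ν F from rfl]
  have hY : (fun i j : Fin (2 * ν + 1) =>
      (if (j : ℕ) = 2 * ν then X (Fin.last (2 * ν + 1))
       else (X (Fin.castSucc j) : MvPolynomial (Fin (2 * ν + 2)) F)) ^
        Fintype.card F ^ (i : ℕ))
      = fun i j : Fin (2 * ν + 1) => Yfun ν F j ^ Fintype.card F ^ (i : ℕ) := rfl
  rw [hY]
  set V : Matrix (Fin (2 * ν + 1)) (Fin (2 * ν + 1)) (MvPolynomial (Fin (2 * ν + 2)) F) :=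
    Matrix.of fun i j : Fin (2 * ν + 1) => Yfun ν F j ^ Fintype.card F ^ (i : ℕ) with hV
  -- Claim A
  have claimA : ∀ k, aeval (gfun ν F) (P k)
      = ∑ a : Fin (2 * ν + 1), Yfun ν F a * Yfun ν F (sF ν a) ^ Fintype.card F ^ k := by
    intro k
    rw [hP k, hS]
    simp only [Matrix.of_apply]
    rw [Finset.sum_congr rfl (fun i (_ : i ∈ Finset.univ) =>
      Finset.sum_congr rfl (fun j (_ : j ∈ Finset.univ) => by rw [S_decomp ν i j]))]
    rw [sum_collapse2]
    rw [map_add, map_sum]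
    simp only [_root_.map_mul, _root_.map_pow, aeval_X]
    exact sum_reindex hchar ν (Fintype.card F) k
  -- Claim B
  have claimB : ∀ k m, (aeval (gfun ν F) (P k)) ^ Fintype.card F ^ m
      = ∑ a : Fin (2 * ν + 1),
          Yfun ν F a ^ Fintype.card F ^ m * Yfun ν F (sF ν a) ^ Fintype.card F ^ (k + m) := by
    intro k m
    rw [claimA k]
    have hcp : Fintype.card F ^ m = 2 ^ ((f : ℕ) * m) := by rw [hcard, ← pow_mul]
    rw [hcp, sum_pow_char_pow]
    refine Finset.sum_congr rfl fun a _ => ?_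
    rw [mul_pow, ← hcp, ← pow_mul, ← pow_add]
  -- permutation matrix
  set Tc : Matrix (Fin (2 * ν + 1)) (Fin (2 * ν + 1)) (MvPolynomial (Fin (2 * ν + 2)) F) :=
    (sPerm ν).permMatrix (MvPolynomial (Fin (2 * ν + 2)) F) with hTc
  have hR : ∀ i j : Fin (2 * ν + 1), (V * Tc * Vᵀ) i j
      = ∑ a : Fin (2 * ν + 1),
          Yfun ν F a ^ Fintype.card F ^ (i : ℕ) * Yfun ν F (sF ν a) ^ Fintype.card F ^ (j : ℕ) := by
    intro i j
    simp only [Matrix.mul_apply, Matrix.transpose_apply, hTc, hV, Matrix.of_apply,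
      Equiv.Perm.permMatrix, PEquiv.toMatrix_apply, Equiv.toPEquiv_apply, Option.mem_some_iff,
      mul_ite, mul_one, mul_zero, ite_mul, zero_mul, one_mul, Finset.sum_mul]
    rw [Finset.sum_comm]
    refine Finset.sum_congr rfl fun a _ => ?_
    simp [Finset.sum_ite_eq, sPerm_apply]
    rw [Finset.sum_eq_single (sF ν a)]
    · simp
    · intro b _ hb; simp [Ne.symm hb]
    · simp
  have hfact : (Matrix.of fun i j : Fin (2 * ν + 1) =>
      if (i : ℕ) ≤ (j : ℕ) then P ((j : ℕ) - (i : ℕ)) ^ Fintype.card F ^ (i : ℕ)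
      else P ((i : ℕ) - (j : ℕ)) ^ Fintype.card F ^ (j : ℕ)).map (aeval (gfun ν F))
      = V * Tc * Vᵀ := by
    refine Matrix.ext fun i j => ?_
    rw [Matrix.map_apply, Matrix.of_apply, hR i j]
    by_cases hij : (i : ℕ) ≤ (j : ℕ)
    · rw [if_pos hij, map_pow, claimB, Nat.sub_add_cancel hij]
    · rw [if_neg hij, map_pow, claimB, Nat.sub_add_cancel (by omega)]
      refine Fintype.sum_equiv (sPerm ν) _ _ fun a => ?_
      rw [sPerm_apply, sF_invol ν a]; ring
  have hdetT : Tc.det = 1 := by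
    rw [hTc, Matrix.det_permutation]
    rcases Int.units_eq_one_or (Equiv.Perm.sign (sPerm ν)) with h | h <;>
      rw [h] <;> simp [CharTwo.neg_eq]
  have h1 : aeval (gfun ν F) K = V.det ^ 2 := by
    rw [hK, AlgHom.map_det, AlgHom.mapMatrix_apply, hfact, Matrix.det_mul, Matrix.det_mul, Matrix.det_transpose,
      hdetT, mul_one, sq]
  refine ⟨h1, ?_⟩
  -- nonvanishing
  set e : Fin (2 * ν + 1) → Fin (2 * ν + 2) :=
    fun a => if (a : ℕ) = 2 * ν then Fin.last (2 * ν + 1) else Fin.castSucc a with he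
  have hev : ∀ x : Fin (2 * ν + 1), ((e x : Fin (2 * ν + 2)) : ℕ)
      = if (x : ℕ) = 2 * ν then 2 * ν + 1 else (x : ℕ) := by
    intro x; simp only [he]; split_ifs with h <;> simp
  have hinj : Function.Injective e := by
    intro a b hab
    have h := congrArg Fin.val hab
    rw [hev, hev] at h
    have ha := a.isLt; have hb := b.isLt
    apply Fin.ext
    split_ifs at h <;> omega
  have hVe : V = Matrix.of fun i j : Fin (2 * ν + 1) =>
      (X (e j) : MvPolynomial (Fin (2 * ν + 2)) F) ^ Fintype.card F ^ (i : ℕ) := by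
    refine Matrix.ext fun i j => ?_
    rw [hV, Matrix.of_apply, Matrix.of_apply, he]
    simp only [Yfun, apply_ite (X (R := F) (σ := Fin (2 * ν + 2)))]
  have hdV : V.det ≠ 0 := by
    rw [hVe]
    exact aux_moore_ne_zero e hinj (Fintype.card F) hq2
  intro h0
  rw [h0, map_zero] at h1
  exact hdV (sq_eq_zero_iff.mp h1.symm)
end
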